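/- If v is a vertex of degree d ≥ 2 in a closed graph G, then the local clustering coefficient satisfies C_v ≥ 1/2 − 1/(2(d−1)); moreover, if d ≥ 3, then C_v ≥ 1/3. -/

import Mathlib

def IsClosedLabeling {n : ℕ} (G : SimpleGraph (Fin n)) : Prop :=
  ∀ u v w : Fin n, G.Adj v u → G.Adj v w → u ≠ w →
    ((v < u ∧ v < w) ∨ (u < v ∧ w < v)) → G.Adj u w

/-- The local clustering coefficient of a vertex: the number of (ordered) pairs
of neighbors joined by an edge divided by the number of (ordered) pairs of
neighbors; this agrees with edges among `N(v)` divided by `C(deg v, 2)`,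
and is `0` (by junk division) when `deg v ≤ 1`. -/
noncomputable def localCluster {V : Type*} (G : SimpleGraph V) (v : V) : ℚ :=
  ({p : V × V | G.Adj v p.1 ∧ G.Adj v p.2 ∧ G.Adj p.1 p.2}.ncard : ℚ) /
    (((G.neighborSet v).ncard : ℚ) * (((G.neighborSet v).ncard : ℚ) - 1))

private lemma key3 (a b : ℕ) (h : 3 ≤ a + b) :
    (a+b)*(a+b) + 2*(a+b) ≤ 3*(a*a+b*b) := by
  have key' : ∀ x y : ℤ, 0 ≤ x → 0 ≤ y → 3 ≤ x + y →
      (x+y)*(x+y) + 2*(x+y) ≤ 3*(x*x+y*y) := by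
    intro x y hx hy hxy
    rcases eq_or_ne x y with rfl | hne
    · have : 2 ≤ x := by omega
      nlinarith
    · rcases lt_or_ge x 1 with h1 | h1
      · have : x = 0 := by omega
        subst this; nlinarith
      rcases lt_or_ge y 1 with h1' | h1'
      · have : y = 0 := by omega
        subst this; nlinarith
      · have hs : 1 ≤ (x - y)^2 := by
          rcases lt_or_gt_of_ne hne with h | h
          · nlinarith
          · nlinarith
        nlinarith [mul_nonneg (by linarith : (0:ℤ) ≤ x - 1)
          (by linarith : (0:ℤ) ≤ y - 1)]
  exact_mod_cast key' a b (Int.natCast_nonneg a) (Int.natCast_nonneg b)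
    (by exact_mod_cast h)


private lemma arith_bound (a b p d : ℕ) (hab : a + b = d) (h2 : 2 ≤ d)
    (hc : a*a + b*b ≤ p + a + b) :
    (p:ℚ) / ((d:ℚ) * ((d:ℚ) - 1)) ≥ 1 / 2 - 1 / (2 * ((d : ℚ) - 1)) ∧
    (3 ≤ d → (p:ℚ) / ((d:ℚ) * ((d:ℚ) - 1)) ≥ 1 / 3) := by
  have hdq : (2:ℚ) ≤ (d:ℚ) := by exact_mod_cast h2
  have hpos : (0:ℚ) < (d:ℚ) * ((d:ℚ) - 1) := by
    apply mul_pos <;> linarith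
  have habq : (a:ℚ) + (b:ℚ) = (d:ℚ) := by exact_mod_cast hab
  have hcq : (a:ℚ)*a + (b:ℚ)*b ≤ (p:ℚ) + a + b := by exact_mod_cast hc
  have h1 : (0:ℚ) < 2 * ((d:ℚ) - 1) := by linarith
  have h2P : (d:ℚ)*d - 2*d ≤ 2*(p:ℚ) := by
    nlinarith [sq_nonneg ((a:ℚ) - b)]
  constructor
  · have e : 1/2 - 1/(2*((d:ℚ)-1)) = ((d:ℚ)-2)/(2*((d:ℚ)-1)) := by
      field_simp [ne_of_gt (by linarith : (0:ℚ) < (d:ℚ) - 1)]; ring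
    rw [ge_iff_le, e, div_le_div_iff₀ h1 hpos]
    nlinarith [mul_le_mul_of_nonneg_right h2P (by linarith : (0:ℚ) ≤ (d:ℚ) - 1)]
  · intro h3
    have keyq : ((a:ℚ)+b)*((a:ℚ)+b) + 2*((a:ℚ)+b) ≤ 3*((a:ℚ)*a+(b:ℚ)*b) := by
      exact_mod_cast key3 a b (by omega)
    rw [ge_iff_le, le_div_iff₀ hpos]
    nlinarith

theorem localCluster_lower_bound {n : ℕ} (G : SimpleGraph (Fin n))
    (hG : IsClosedLabeling G) (v : Fin n) (d : ℕ)
    (hd : d = (G.neighborSet v).ncard) (h2 : 2 ≤ d) :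
    localCluster G v ≥ 1 / 2 - 1 / (2 * ((d : ℚ) - 1)) ∧
    (3 ≤ d → localCluster G v ≥ 1 / 3) := by
  classical
  set N := G.neighborFinset v with hN
  set A := N.filter (fun u => v < u) with hA
  set B := N.filter (fun u => ¬ v < u) with hB
  set P := (N ×ˢ N).filter (fun p => G.Adj p.1 p.2) with hP
  set a := A.card
  set b := B.card
  have hdN : d = N.card := by
    rw [hd, hN, SimpleGraph.neighborFinset_def, Set.ncard_eq_toFinset_card']
  have hBlt : ∀ u ∈ B, u < v := by
    intro u hu
    rw [hB, Finset.mem_filter] at hu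
    have hne : u ≠ v :=
      (G.ne_of_adj ((SimpleGraph.mem_neighborFinset G v u).mp hu.1)).symm
    exact lt_of_le_of_ne (not_lt.mp hu.2) hne
  have hab : a + b = d := by
    rw [hdN]; exact Finset.card_filter_add_card_filter_not _
  have hsub : A.offDiag ∪ B.offDiag ⊆ P := by
    intro p hp
    rw [Finset.mem_union] at hp
    rw [hP, Finset.mem_filter, Finset.mem_product]
    rcases hp with hp | hp
    · rw [Finset.mem_offDiag] at hp
      obtain ⟨h1, h2, hne⟩ := hp
      rw [hA, Finset.mem_filter] at h1 h2
      refine ⟨⟨h1.1, h2.1⟩, ?_⟩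
      exact hG p.1 v p.2 ((SimpleGraph.mem_neighborFinset G v p.1).mp h1.1)
        ((SimpleGraph.mem_neighborFinset G v p.2).mp h2.1) hne (Or.inl ⟨h1.2, h2.2⟩)
    · rw [Finset.mem_offDiag] at hp
      obtain ⟨h1, h2, hne⟩ := hp
      refine ⟨⟨(Finset.mem_filter.mp h1).1, (Finset.mem_filter.mp h2).1⟩, ?_⟩
      exact hG p.1 v p.2
        ((SimpleGraph.mem_neighborFinset G v p.1).mp (Finset.mem_filter.mp h1).1)
        ((SimpleGraph.mem_neighborFinset G v p.2).mp (Finset.mem_filter.mp h2).1)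
        hne (Or.inr ⟨hBlt _ h1, hBlt _ h2⟩)
  have hABdisj : Disjoint A B := by
    rw [hA, hB]
    exact Finset.disjoint_filter_filter_not N N _
  have hdisj : Disjoint A.offDiag B.offDiag := by
    rw [Finset.disjoint_left]
    intro p hp hp'
    exact Finset.disjoint_left.mp hABdisj (Finset.mem_offDiag.mp hp).1
      (Finset.mem_offDiag.mp hp').1
  have hcard : a*a - a + (b*b - b) ≤ P.card := by
    calc a*a - a + (b*b - b) = A.offDiag.card + B.offDiag.card := by
          rw [Finset.offDiag_card, Finset.offDiag_card]
      _ = (A.offDiag ∪ B.offDiag).card := (Finset.card_union_of_disjoint hdisj).symm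
      _ ≤ P.card := Finset.card_le_card hsub
  have hcard' : a*a + b*b ≤ P.card + a + b := by
    have ha1 : a ≤ a*a := by nlinarith
    have hb1 : b ≤ b*b := by nlinarith
    omega
  have hS : {p : Fin n × Fin n | G.Adj v p.1 ∧ G.Adj v p.2 ∧ G.Adj p.1 p.2}.ncard
      = P.card := by
    have : {p : Fin n × Fin n | G.Adj v p.1 ∧ G.Adj v p.2 ∧ G.Adj p.1 p.2} = ↑P := by
      ext ⟨x, y⟩
      simp [hP, hN, Finset.mem_filter, Finset.mem_product,
        SimpleGraph.mem_neighborFinset, and_assoc]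
    rw [this, Set.ncard_coe_finset]
  have hNd : ((G.neighborSet v).ncard : ℚ) = (d : ℚ) := by rw [hd]
  rw [localCluster, hS, hNd]
  exact arith_bound a b P.card d hab h2 hcard'
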